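/- Let a > 0 and C₀ ≥ 0. There exists ε₀ > 0 (depending only on a and C₀) such that: for every continuously differentiable function ρ : [0, ∞) → ℝ with ρ(t) > 0 for all t ≥ 0, ρ(0) ≤ ε₀, and |ρ'(t) + a·ρ(t)³| ≤ C₀·ρ(t)⁴ for all t ≥ 0, there exists a constant C₁ > 0 such that |ρ(t)·√(2at) − 1| ≤ C₁/√t for all t ≥ 1. In particular ρ(t)·√(2at) → 1 as t → ∞. -/

import Mathlib

open Real Set Filter Topology

set_option maxHeartbeats 1000000

/-- ODE asymptotics: if ρ > 0 on [0,∞) is C¹ with ρ(0) small and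
    |ρ' + a·ρ³| ≤ C₀·ρ⁴, then ρ(t)·√(2at) = 1 + O(1/√t) as t → ∞. -/
theorem stmt_16 (a C₀ : ℝ) (ha : 0 < a) (hC₀ : 0 ≤ C₀) :
    ∃ ε₀ : ℝ, 0 < ε₀ ∧
      ∀ ρ ρ' : ℝ → ℝ,
        ContinuousOn ρ' (Set.Ici (0:ℝ)) →
        (∀ t ∈ Set.Ici (0:ℝ), HasDerivWithinAt ρ (ρ' t) (Set.Ici (0:ℝ)) t) →
        (∀ t : ℝ, 0 ≤ t → 0 < ρ t) →
        ρ 0 ≤ ε₀ →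
        (∀ t : ℝ, 0 ≤ t → |ρ' t + a * ρ t ^ 3| ≤ C₀ * ρ t ^ 4) →
        ∃ C₁ : ℝ, 0 < C₁ ∧
          ∀ t : ℝ, 1 ≤ t →
            |ρ t * Real.sqrt (2 * a * t) - 1| ≤ C₁ / Real.sqrt t := by
  refine ⟨a / (2 * (C₀ + 1)), by positivity, ?_⟩
  intro ρ ρ' hρ'c hderiv hpos hinit hineq
  set ε₀ := a / (2 * (C₀ + 1)) with hε₀def
  have hε₀pos : 0 < ε₀ := by positivity
  have hCε : C₀ * ε₀ ≤ a / 2 := by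
    rw [hε₀def, ← mul_div_assoc, div_le_div_iff₀ (by positivity) (by norm_num)]
    nlinarith
  have hρc : ContinuousOn ρ (Ici 0) := fun t ht => (hderiv t ht).continuousWithinAt
  -- Step 1: ρ stays below ε₀
  have hsmall : ∀ t, 0 ≤ t → ρ t ≤ ε₀ := by
    intro t₁ ht₁0
    by_contra hcon
    push_neg at hcon
    set S := Icc (0:ℝ) t₁ ∩ ρ ⁻¹' Iic ε₀ with hSdef
    have hScl : IsClosed S :=
      (hρc.mono Icc_subset_Ici_self).preimage_isClosed_of_isClosed isClosed_Icc isClosed_Iic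
    have hS0 : (0:ℝ) ∈ S := ⟨⟨le_rfl, ht₁0⟩, hinit⟩
    have hbdd : BddAbove S := ⟨t₁, fun x hx => hx.1.2⟩
    set s := sSup S with hsdef
    have hsS : s ∈ S := hScl.csSup_mem ⟨0, hS0⟩ hbdd
    obtain ⟨⟨hs0, hs1⟩, hsρ⟩ := hsS
    have hsρ' : ρ s ≤ ε₀ := hsρ
    have hslt : s < t₁ := lt_of_le_of_ne hs1 (by
      intro h; rw [h] at hsρ'; exact absurd hsρ' (not_le.2 hcon))
    have hρs : 0 < ρ s := hpos s hs0
    have habs := abs_le.mp (hineq s hs0)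
    have hd : ρ' s < 0 := by
      have h1 : C₀ * ρ s ≤ a / 2 := le_trans (by nlinarith) hCε
      nlinarith [pow_pos hρs 3, habs.2]
    have hds : HasDerivWithinAt ρ (ρ' s) (Ioi s) s :=
      (hderiv s hs0).mono (fun x hx => le_of_lt (lt_of_le_of_lt hs0 hx))
    rw [hasDerivWithinAt_iff_tendsto_slope' (notMem_Ioi.2 le_rfl)] at hds
    have hneg : ∀ᶠ t in 𝓝[>] s, slope ρ s t < 0 := hds.eventually_lt_const hd
    have hIoo : Ioo s t₁ ∈ 𝓝[>] s := Ioo_mem_nhdsGT_of_mem ⟨le_rfl, hslt⟩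
    obtain ⟨t, htneg, htIoo⟩ := (hneg.and (eventually_of_mem hIoo (fun x hx => hx))).exists
    have hts : s < t := htIoo.1
    rw [slope_def_field] at htneg
    have hlt : ρ t < ρ s := by
      have hd' : 0 < t - s := sub_pos.2 hts
      rcases div_neg_iff.mp htneg with ⟨h1, h2⟩ | ⟨h1, h2⟩
      · linarith
      · linarith
    have htS : t ∈ S := ⟨⟨le_trans hs0 hts.le, htIoo.2.le⟩, le_trans hlt.le hsρ'⟩
    exact absurd (le_csSup hbdd htS) (not_le.2 hts)
  -- Step 2: u = 1/ρ² and its derivative bounds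
  set u : ℝ → ℝ := fun t => (ρ t ^ 2)⁻¹ with hudef
  set u' : ℝ → ℝ := fun t => -2 * ρ' t / ρ t ^ 3 with hu'def
  have hune : ∀ t, 0 ≤ t → ρ t ^ 2 ≠ 0 := fun t ht => pow_ne_zero 2 (hpos t ht).ne'
  have hu : ∀ t ∈ Ici (0:ℝ), HasDerivWithinAt u (u' t) (Ici 0) t := by
    intro t ht
    have h := ((hderiv t ht).pow 2).inv (hune t ht)
    have hne : ρ t ≠ 0 := (hpos t ht).ne'
    refine HasDerivWithinAt.congr_deriv h ?_
    show -(((2:ℕ):ℝ) * ρ t ^ (2 - 1) * ρ' t) / (ρ t ^ 2) ^ 2 = -2 * ρ' t / ρ t ^ 3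
    rw [div_eq_div_iff (pow_ne_zero 2 (hune t ht)) (pow_ne_zero 3 hne)]
    push_cast
    ring
  have huc : ContinuousOn u (Ici 0) := fun t ht => (hu t ht).continuousWithinAt
  have hupos : ∀ t, 0 ≤ t → 0 < u t := fun t ht =>
    inv_pos.2 (pow_pos (hpos t ht) 2)
  have hu'lb : ∀ t, 0 ≤ t → 2*a - 2*C₀*ρ t ≤ u' t := by
    intro t ht
    have hr := hpos t ht
    have habs := abs_le.mp (hineq t ht)
    rw [hu'def]
    rw [le_div_iff₀ (pow_pos hr 3)]
    nlinarith [habs.2]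
  have hu'ub : ∀ t, 0 ≤ t → u' t ≤ 2*a + 2*C₀*ρ t := by
    intro t ht
    have hr := hpos t ht
    have habs := abs_le.mp (hineq t ht)
    rw [hu'def, div_le_iff₀ (pow_pos hr 3)]
    nlinarith [habs.1]
  -- monotonicity of u - a t  ⇒  u ≥ a t
  have hmono1 : MonotoneOn (fun t => u t - a * t) (Ici 0) := by
    apply monotoneOn_of_hasDerivWithinAt_nonneg (convex_Ici 0)
      (f' := fun t => u' t - a)
    · exact huc.sub ((continuous_const.mul continuous_id).continuousOn)
    · intro x hx
      rw [interior_Ici] at hx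
      exact ((hu x (mem_Ici.mpr (mem_Ioi.mp hx).le)).mono interior_subset).sub
        (by simpa using ((hasDerivAt_id x).const_mul a).hasDerivWithinAt)
    · intro x hx
      rw [interior_Ici] at hx
      have h1 := hu'lb x hx.le
      have h2 : C₀ * ρ x ≤ a / 2 :=
        le_trans (mul_le_mul_of_nonneg_left (hsmall x hx.le) hC₀) hCε
      linarith
  have hulb : ∀ t, 0 ≤ t → a * t ≤ u t := by
    intro t ht
    have h := hmono1 (self_mem_Ici) ht ht
    have h0 : 0 < u 0 := hupos 0 le_rfl
    simp only [mul_zero, sub_zero] at h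
    linarith
  -- ρ t ≤ 1/(√a √t) for t > 0
  have hρsq : ∀ t, 0 < t → ρ t ^ 2 ≤ (a * t)⁻¹ := by
    intro t ht
    have h1 : a * t ≤ (ρ t ^ 2)⁻¹ := hulb t ht.le
    have h2 : 0 < a * t := by positivity
    calc ρ t ^ 2 = ((ρ t ^ 2)⁻¹)⁻¹ := by rw [inv_inv]
    _ ≤ (a * t)⁻¹ := inv_anti₀ h2 h1
  have hρbound : ∀ t, 0 < t → ρ t ≤ (Real.sqrt a * Real.sqrt t)⁻¹ := by
    intro t ht
    have h := hρsq t ht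
    have h2 : ρ t ≤ Real.sqrt ((a*t)⁻¹) := by
      rw [← Real.sqrt_sq (hpos t ht.le).le]
      exact Real.sqrt_le_sqrt h
    rwa [Real.sqrt_inv, Real.sqrt_mul ha.le] at h2
  -- comparison functions on [1, ∞)
  set K := 2 * C₀ / Real.sqrt a with hKdef
  have hKnn : 0 ≤ K := by positivity
  have hsqrtd : ∀ x : ℝ, 0 < x →
      HasDerivWithinAt (fun t => 2 * K * Real.sqrt t) (2 * K * (1 / (2 * Real.sqrt x)))
        (interior (Ici 1)) x := by
    intro x hx
    exact ((Real.hasDerivAt_sqrt hx.ne').const_mul (2*K)).hasDerivWithinAt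
  have hcont2 : ContinuousOn (fun t => 2 * a * t + 2 * K * Real.sqrt t) (Ici 1) :=
    ((continuous_const.mul continuous_id).add
      (continuous_const.mul Real.continuous_sqrt)).continuousOn
  have hKbound : ∀ x : ℝ, 1 < x → 2 * C₀ * ρ x ≤ 2 * K * (1 / (2 * Real.sqrt x)) := by
    intro x hx
    have hx0 : (0:ℝ) < x := by linarith
    have h1 := hρbound x hx0
    have hsa : 0 < Real.sqrt a := Real.sqrt_pos.2 ha
    have hsx : 0 < Real.sqrt x := Real.sqrt_pos.2 hx0
    rw [hKdef]
    rw [mul_inv] at h1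
    calc 2 * C₀ * ρ x ≤ 2 * C₀ * ((Real.sqrt a)⁻¹ * (Real.sqrt x)⁻¹) := by
          apply mul_le_mul_of_nonneg_left h1 (by positivity)
    _ = 2 * (2 * C₀ / Real.sqrt a) * (1 / (2 * Real.sqrt x)) := by
          field_simp
  have hderivIci : ∀ x : ℝ, x ∈ interior (Ici (1:ℝ)) →
      HasDerivWithinAt u (u' x) (interior (Ici 1)) x := by
    intro x hx
    rw [interior_Ici] at hx
    have hx1 : (1:ℝ) < x := mem_Ioi.mp hx
    exact (hu x (mem_Ici.mpr (by linarith))).mono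
      (by rw [interior_Ici]; intro y hy; exact mem_Ici.mpr (le_trans zero_le_one (le_of_lt (mem_Ioi.mp hy))))
  have hlin : ∀ x : ℝ, HasDerivWithinAt (fun t => 2 * a * t) (2 * a)
      (interior (Ici (1:ℝ))) x := by
    intro x
    simpa using ((hasDerivAt_id x).const_mul (2*a)).hasDerivWithinAt
  -- antitone: u - 2at - 2K√t
  have hanti : AntitoneOn (fun t => u t - (2 * a * t + 2 * K * Real.sqrt t)) (Ici 1) := by
    apply antitoneOn_of_hasDerivWithinAt_nonpos (convex_Ici 1)
      (f' := fun x => u' x - (2 * a + 2 * K * (1 / (2 * Real.sqrt x))))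
    · exact (huc.mono (Ici_subset_Ici.mpr zero_le_one)).sub hcont2
    · intro x hx
      have hx1 : 1 < x := by rw [interior_Ici] at hx; exact hx
      exact (hderivIci x hx).sub ((hlin x).add (hsqrtd x (by linarith)))
    · intro x hx
      have hx1 : 1 < x := by rw [interior_Ici] at hx; exact hx
      have h1 := hu'ub x (by linarith)
      have h2 := hKbound x hx1
      linarith
  -- monotone: u - 2at + 2K√t
  have hmono2 : MonotoneOn (fun t => u t - 2 * a * t + 2 * K * Real.sqrt t) (Ici 1) := by
    apply monotoneOn_of_hasDerivWithinAt_nonneg (convex_Ici 1)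
      (f' := fun x => u' x - 2 * a + 2 * K * (1 / (2 * Real.sqrt x)))
    · exact ((huc.mono (Ici_subset_Ici.mpr zero_le_one)).sub
        ((continuous_const.mul continuous_id).continuousOn)).add
        (continuous_const.mul Real.continuous_sqrt).continuousOn
    · intro x hx
      have hx1 : 1 < x := by rw [interior_Ici] at hx; exact hx
      exact ((hderivIci x hx).sub (hlin x)).add (hsqrtd x (by linarith))
    · intro x hx
      have hx1 : 1 < x := by rw [interior_Ici] at hx; exact hx
      have h1 := hu'lb x (by linarith)
      have h2 := hKbound x hx1
      linarith
  -- conclude |u t - 2at| ≤ B √t for t ≥ 1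
  set B := 2 * K + u 1 + 2 * a with hBdef
  have hB : 0 < B := by
    have := hupos 1 zero_le_one
    nlinarith
  have hbound : ∀ t, 1 ≤ t → |u t - 2 * a * t| ≤ B * Real.sqrt t := by
    intro t ht
    have hst : 1 ≤ Real.sqrt t := by
      rw [show (1:ℝ) = Real.sqrt 1 by simp]; exact Real.sqrt_le_sqrt ht
    have hst0 : 0 < Real.sqrt t := by linarith
    have h1 := hanti (self_mem_Ici) ht ht
    have h2 := hmono2 (self_mem_Ici) ht ht
    simp only [Real.sqrt_one, mul_one] at h1 h2
    have hu1 : 0 < u 1 := hupos 1 zero_le_one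
    rw [abs_le]
    constructor
    · -- -B√t ≤ u t - 2at
      have : u 1 - 2*a + 2*K ≤ u t - 2*a*t + 2*K*Real.sqrt t := h2
      nlinarith
    · have : u t - (2*a*t + 2*K*Real.sqrt t) ≤ u 1 - (2*a + 2*K) := h1
      nlinarith
  -- final algebra
  refine ⟨B / a + 1, by positivity, ?_⟩
  intro t ht
  have ht0 : (0:ℝ) < t := by linarith
  have hst : 1 ≤ Real.sqrt t := by
    rw [show (1:ℝ) = Real.sqrt 1 by simp]; exact Real.sqrt_le_sqrt ht
  have hst0 : 0 < Real.sqrt t := by linarith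
  have hr : 0 < ρ t := hpos t ht0.le
  set x := ρ t * Real.sqrt (2 * a * t) with hxdef
  have hxnn : 0 ≤ x := by positivity
  have hx2 : x ^ 2 = ρ t ^ 2 * (2 * a * t) := by
    rw [hxdef, mul_pow, Real.sq_sqrt (by positivity)]
  have husq : ρ t ^ 2 * u t = 1 := by
    rw [hudef]; field_simp
  have hid : x ^ 2 - 1 = ρ t ^ 2 * (2 * a * t - u t) := by
    rw [hx2, mul_sub, husq]
  have h1 : |x ^ 2 - 1| ≤ ρ t ^ 2 * (B * Real.sqrt t) := by
    rw [hid, abs_mul, abs_of_nonneg (sq_nonneg _), abs_sub_comm]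
    exact mul_le_mul_of_nonneg_left (hbound t ht) (sq_nonneg _)
  have h2 : ρ t ^ 2 * (B * Real.sqrt t) ≤ B / (a * Real.sqrt t) := by
    have hsq := hρsq t ht0
    have hts : Real.sqrt t * Real.sqrt t = t := Real.mul_self_sqrt ht0.le
    calc ρ t ^ 2 * (B * Real.sqrt t) ≤ (a * t)⁻¹ * (B * Real.sqrt t) :=
          mul_le_mul_of_nonneg_right hsq (by positivity)
    _ = B / (a * Real.sqrt t) := by
          have hane : (a : ℝ) ≠ 0 := ha.ne'
          have hstne : Real.sqrt t ≠ 0 := hst0.ne'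
          have htne : t ≠ 0 := ht0.ne'
          have hre : (a * t)⁻¹ * (B * Real.sqrt t) = B * Real.sqrt t / (a * (Real.sqrt t * Real.sqrt t)) := by
            rw [hts]; ring
          rw [hre, div_eq_div_iff (by positivity) (by positivity)]
          ring
  have h3 : |x - 1| ≤ |x ^ 2 - 1| := by
    have : x ^ 2 - 1 = (x - 1) * (x + 1) := by ring
    rw [this, abs_mul]
    nlinarith [abs_nonneg (x-1), abs_of_nonneg (by linarith : (0:ℝ) ≤ x + 1)]
  calc |x - 1| ≤ B / (a * Real.sqrt t) := le_trans h3 (le_trans h1 h2)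
  _ = (B / a) / Real.sqrt t := by rw [div_div]
  _ ≤ (B / a + 1) / Real.sqrt t := by gcongr; linarith
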